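/- Let p be a prime and k ≥ 2, and let P be the two-weight code of length p^{k-1} over Z_p generated by the matrix A whose first row is all ones and whose remaining rows form a matrix B with all distinct vectors of Z_p^{k-1} as columns. Then the weight enumerator of P is W_P(X,Y) = X^{p^{k-1}} + (p^k - p)·X^{p^{k-2}}·Y^{(p-1)p^{k-2}} + (p-1)·Y^{p^{k-1}}, where W_P(X,Y) = Σ_{c∈P} X^{n−wt(c)} Y^{wt(c)} with n = p^{k-1}. -/

import Mathlib

open Finset

-- cardinality of a fiber of a nonzero linear functional
lemma fiber_card (p m : ℕ) [Fact p.Prime] (v : Fin m → ZMod p) (hv : v ≠ 0) (c : ZMod p) :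
    Fintype.card {x : Fin m → ZMod p // ∑ i, v i * x i = c} = p ^ (m - 1) := by
  classical
  set φ : (Fin m → ZMod p) →ₗ[ZMod p] ZMod p :=
    { toFun := fun x => ∑ i, v i * x i
      map_add' := by intro x y; simp [mul_add, Finset.sum_add_distrib]
      map_smul' := by intro r x; simp only [Pi.smul_apply, smul_eq_mul, RingHom.id_apply, Finset.mul_sum]; exact Finset.sum_congr rfl fun i _ => mul_left_comm _ _ _ } with hφ
  obtain ⟨i₀, hi₀⟩ : ∃ i, v i ≠ 0 := by
    by_contra h; push_neg at h; exact hv (funext h)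
  have hsurj : Function.Surjective φ := by
    intro b
    refine ⟨Pi.single i₀ (b / v i₀), ?_⟩
    simp only [hφ, LinearMap.coe_mk, AddHom.coe_mk]
    rw [Finset.sum_eq_single i₀]
    · rw [Pi.single_eq_same]; field_simp
    · intro i _ hi; simp [Pi.single_eq_of_ne hi]
    · simp
  -- finrank of kernel
  have hrank : Module.finrank (ZMod p) (LinearMap.ker φ) = m - 1 := by
    have h1 := LinearMap.finrank_range_add_finrank_ker φ
    have h2 : LinearMap.range φ = ⊤ := LinearMap.range_eq_top.2 hsurj
    rw [h2] at h1
    simp [Module.finrank_pi, Module.finrank_self] at h1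
    omega
  have hker : Fintype.card (LinearMap.ker φ) = p ^ (m - 1) := by
    rw [Module.card_eq_pow_finrank (K := ZMod p) (V := LinearMap.ker φ), ZMod.card, hrank]
  obtain ⟨x₀, hx₀⟩ := hsurj c
  have e : {x : Fin m → ZMod p // ∑ i, v i * x i = c} ≃ LinearMap.ker φ :=
    { toFun := fun x => ⟨x.1 - x₀, by
        have hx : φ x.1 = c := x.2
        simp [LinearMap.mem_ker, map_sub, hx, hx₀]⟩
      invFun := fun y => ⟨y.1 + x₀, by
        have hy : φ y.1 = 0 := y.2
        have : φ (y.1 + x₀) = c := by rw [map_add, hy, hx₀, zero_add]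
        simpa [hφ] using this⟩
      left_inv := fun x => by simp
      right_inv := fun y => by simp }
  rw [Fintype.card_congr e, hker]
/-- the weight enumerator of the two-weight code `P` is
`X^(p^(k-1)) + (p^k - p)·X^(p^(k-2))·Y^((p-1)p^(k-2)) + (p-1)·Y^(p^(k-1))`. -/
theorem stmt1 (p k : ℕ) (hp : p.Prime) (hk : 2 ≤ k)
    (A : Fin k → Fin (p ^ (k - 1)) → ZMod p)
    (hrow0 : ∀ j, A ⟨0, by omega⟩ j = 1)
    (hB : Function.Bijective
      (fun (j : Fin (p ^ (k - 1))) => fun (i : Fin (k - 1)) => A ⟨i.val + 1, by omega⟩ j))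
    (P : Submodule (ZMod p) (Fin (p ^ (k - 1)) → ZMod p))
    (hP : P = Submodule.span (ZMod p) (Set.range A))
    (R : Type*) [CommRing R] (X Y : R) :
    ∑ᶠ c ∈ (P : Set (Fin (p ^ (k - 1)) → ZMod p)),
        X ^ (p ^ (k - 1) - hammingNorm c) * Y ^ (hammingNorm c)
      = X ^ (p ^ (k - 1))
        + (p ^ k - p : ℕ) * (X ^ (p ^ (k - 2)) * Y ^ ((p - 1) * p ^ (k - 2)))
        + (p - 1 : ℕ) * Y ^ (p ^ (k - 1)) := by
  classical
  haveI : Fact p.Prime := ⟨hp⟩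
  obtain ⟨m, rfl⟩ : ∃ m, k = m + 1 := ⟨k - 1, by omega⟩
  have hm : 1 ≤ m := by omega
  -- the column map
  set B : Fin (p ^ m) → Fin m → ZMod p := fun j i => A i.succ j with hBdef
  have hBb : Function.Bijective B := hB
  set e : Fin (p ^ m) ≃ (Fin m → ZMod p) := Equiv.ofBijective B hBb with he
  -- the parametrization of codewords
  set g : ZMod p × (Fin m → ZMod p) → (Fin (p ^ m) → ZMod p) :=
    fun av j => av.1 + ∑ i, av.2 i * B j i with hg
  -- P = range g
  have hPg : SetLike.coe P = Set.range g := by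
    ext c
    rw [SetLike.mem_coe, hP, Submodule.mem_span_range_iff_exists_fun]
    constructor
    · rintro ⟨d, hd⟩
      refine ⟨(d 0, fun i => d i.succ), ?_⟩
      funext j
      have := congrFun hd j
      rw [Finset.sum_apply, Fin.sum_univ_succ] at this
      simp only [Pi.smul_apply, smul_eq_mul] at this
      have h0 : A 0 j = 1 := hrow0 j
      simp only [hg, hBdef]
      rw [← this, h0, mul_one]
    · rintro ⟨⟨a, v⟩, rfl⟩
      refine ⟨Fin.cons a v, ?_⟩
      funext j
      rw [Finset.sum_apply, Fin.sum_univ_succ]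
      simp only [Pi.smul_apply, smul_eq_mul, Fin.cons_zero, Fin.cons_succ]
      have h0 : A 0 j = 1 := hrow0 j
      simp [hg, hBdef, h0]
  -- g is injective
  have hginj : Function.Injective g := by
    rintro ⟨a, v⟩ ⟨a', v'⟩ hgav
    have key : ∀ x : Fin m → ZMod p,
        a + ∑ i, v i * x i = a' + ∑ i, v' i * x i := by
      intro x
      have := congrFun hgav (e.symm x)
      simpa [hg, show B (e.symm x) = x from e.apply_symm_apply x] using this
    have ha : a = a' := by have := key 0; simpa using this
    have hv : v = v' := by
      funext i
      set s : Fin m → ZMod p := Pi.single i 1 with hs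
      have := key s
      rw [ha] at this
      have h1 : ∀ w : Fin m → ZMod p, ∑ i', w i' * s i' = w i := by
        intro w
        rw [Finset.sum_eq_single i]
        · simp [hs]
        · intro i' _ hi'; simp [hs, Pi.single_eq_of_ne hi']
        · simp
      rw [h1, h1] at this
      exact add_left_cancel this
    rw [ha, hv]
  -- weight of g (a, v)
  have hwt : ∀ a v, hammingNorm (g (a, v))
      = Fintype.card {x : Fin m → ZMod p // a + ∑ i, v i * x i ≠ 0} := by
    intro a v
    rw [hammingNorm, ← Fintype.card_subtype]
    exact Fintype.card_congr (e.subtypeEquiv fun j => Iff.rfl)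
  have hcardfun : Fintype.card (Fin m → ZMod p) = p ^ m := by
    simp [ZMod.card]
  -- weight when v ≠ 0
  have hwt1 : ∀ a (v : Fin m → ZMod p), v ≠ 0 →
      hammingNorm (g (a, v)) = (p - 1) * p ^ (m - 1) := by
    intro a v hv
    rw [hwt]
    rw [Fintype.card_subtype_compl]   -- needs ¬ form; check
    have : Fintype.card {x : Fin m → ZMod p // a + ∑ i, v i * x i = 0} = p ^ (m - 1) := by
      rw [Fintype.card_congr (Equiv.subtypeEquivRight (fun x => by
        rw [add_comm, add_eq_zero_iff_eq_neg])), fiber_card p m v hv (-a)]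
    rw [this, hcardfun]
    have hple : p ^ (m - 1) ≤ p ^ m := Nat.pow_le_pow_right hp.pos (Nat.sub_le m 1)
    have hpm : p * p ^ (m - 1) = p ^ m := by
      have := (pow_succ' p (m - 1)).symm
      rwa [Nat.sub_add_cancel hm] at this
    rw [Nat.sub_mul, one_mul, hpm]
  -- weight when v = 0
  have hwt0 : ∀ a : ZMod p, hammingNorm (g (a, 0)) = if a = 0 then 0 else p ^ m := by
    intro a
    rw [hwt]
    by_cases ha : a = 0
    · simp [ha]
    · simp only [ha, if_false]
      rw [Fintype.card_congr (Equiv.subtypeUnivEquiv (fun x => by simpa using ha))]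
      exact hcardfun
  -- subsidiary arithmetic
  have hple : p ^ (m - 1) ≤ p ^ m := Nat.pow_le_pow_right hp.pos (Nat.sub_le m 1)
  have hpm : p * p ^ (m - 1) = p ^ m := by
    have := (pow_succ' p (m - 1)).symm
    rwa [Nat.sub_add_cancel hm] at this
  have hsub : p ^ m - (p - 1) * p ^ (m - 1) = p ^ (m - 1) := by
    rw [Nat.sub_mul, one_mul, hpm]
    omega
  -- rewrite the goal
  simp only [show m + 1 - 1 = m by omega, show m + 1 - 2 = m - 1 by omega]
  rw [hPg]
  show (∑ᶠ c ∈ Set.range g, X ^ (p ^ m - hammingNorm c) * Y ^ hammingNorm c) = _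
  rw [finsum_mem_range hginj, finsum_eq_sum_of_fintype, Fintype.sum_prod_type]
  have hinner : ∀ a : ZMod p,
      (∑ v : Fin m → ZMod p,
        X ^ (p ^ m - hammingNorm (g (a, v))) * Y ^ hammingNorm (g (a, v)))
      = X ^ (p ^ m - hammingNorm (g (a, 0))) * Y ^ hammingNorm (g (a, 0))
        + (p ^ m - 1 : ℕ) * (X ^ (p ^ (m - 1)) * Y ^ ((p - 1) * p ^ (m - 1))) := by
    intro a
    rw [← Finset.add_sum_erase _ _ (Finset.mem_univ (0 : Fin m → ZMod p))]
    congr 1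
    calc ∑ v ∈ Finset.univ.erase (0 : Fin m → ZMod p),
          X ^ (p ^ m - hammingNorm (g (a, v))) * Y ^ hammingNorm (g (a, v))
        = ∑ _v ∈ Finset.univ.erase (0 : Fin m → ZMod p),
            X ^ (p ^ (m - 1)) * Y ^ ((p - 1) * p ^ (m - 1)) :=
          Finset.sum_congr rfl fun v hv => by
            rw [hwt1 a v (Finset.ne_of_mem_erase hv), hsub]
      _ = (p ^ m - 1 : ℕ) * (X ^ (p ^ (m - 1)) * Y ^ ((p - 1) * p ^ (m - 1))) := by
            rw [Finset.sum_const, Finset.card_erase_of_mem (Finset.mem_univ _),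
              Finset.card_univ, hcardfun, nsmul_eq_mul]
  rw [Finset.sum_congr rfl fun a _ => hinner a, Finset.sum_add_distrib,
    Finset.sum_const, Finset.card_univ, ZMod.card, nsmul_eq_mul]
  have houter : (∑ a : ZMod p,
      X ^ (p ^ m - hammingNorm (g (a, 0))) * Y ^ hammingNorm (g (a, 0)))
      = X ^ (p ^ m) + (p - 1 : ℕ) * Y ^ (p ^ m) := by
    rw [← Finset.add_sum_erase _ _ (Finset.mem_univ (0 : ZMod p))]
    congr 1
    · rw [hwt0 0]
      simp
    · calc ∑ a ∈ Finset.univ.erase (0 : ZMod p),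
            X ^ (p ^ m - hammingNorm (g (a, 0))) * Y ^ hammingNorm (g (a, 0))
          = ∑ _a ∈ Finset.univ.erase (0 : ZMod p), Y ^ (p ^ m) :=
            Finset.sum_congr rfl fun a ha => by
              rw [hwt0 a, if_neg (Finset.ne_of_mem_erase ha)]
              simp
        _ = (p - 1 : ℕ) * Y ^ (p ^ m) := by
              rw [Finset.sum_const, Finset.card_erase_of_mem (Finset.mem_univ _),
                Finset.card_univ, ZMod.card, nsmul_eq_mul]
  rw [houter]
  have hnat : (p ^ m - 1) * p = p ^ (m + 1) - p := by
    rw [Nat.sub_mul, one_mul, ← pow_succ]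
  rw [← hnat, Nat.cast_mul]
  ring
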